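/- Relative Ancona inequality from the ε-avoidance estimate: let Γ be a countable group with a transient random walk with Green function G. Suppose g, h, p ∈ Γ and R ≥ 0 satisfy G(g,h; B_R(p)ᶜ) ≤ (1/2)·G(g,h), and suppose there is a constant C such that G(g,q) ≤ C·G(g,p) and G(q,h) ≤ C·G(p,h) for all q in the ball B_R(p). Then G(g,h) ≤ 2C²·|B_R(p)|·G(g,p)·G(p,h). -/

import Mathlib

open scoped ENNReal

/-- The weight of a trajectory of the random walk driven by `μ`. -/
noncomputable def pathWeight {G : Type*} [Group G] (μ : G → ℝ≥0∞) : List G → ℝ≥0∞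
  | [] => 1
  | [_] => 1
  | a :: b :: l => μ (a⁻¹ * b) * pathWeight μ (b :: l)

/-- A trajectory starting at `g` and ending at `h`. -/
def IsPathFromTo {G : Type*} (g h : G) (l : List G) : Prop :=
  l.head? = some g ∧ l.getLast? = some h

/-- A trajectory from `g` to `h` all of whose intermediate points (excluding the
endpoints) lie in `A`. -/
def IsPathFromToIn {G : Type*} (A : Set G) (g h : G) (l : List G) : Prop :=
  IsPathFromTo g h l ∧ ∀ i : ℕ, 0 < i → i + 1 < l.length → ∀ x : G, l[i]? = some x → x ∈ A

/-- The Green function: total weight of all trajectories from `g` to `h`. -/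
noncomputable def green {G : Type*} [Group G] (μ : G → ℝ≥0∞) (g h : G) : ℝ≥0∞ :=
  ∑' l : {l : List G // IsPathFromTo g h l}, pathWeight μ l.1

/-- The restricted Green function `G(g,h;A)`: the contribution to `G(g,h)` of the
trajectories all of whose intermediate points lie in `A`. -/
noncomputable def greenRes {G : Type*} [Group G] (μ : G → ℝ≥0∞) (A : Set G) (g h : G) :
    ℝ≥0∞ :=
  ∑' l : {l : List G // IsPathFromToIn A g h l}, pathWeight μ l.1

/-- The word distance on `G` with respect to a generating set `S`. -/
noncomputable def wordDist {G : Type*} [Group G] (S : Set G) (g h : G) : ℕ :=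
  sInf {n | ∃ l : List G, (∀ s ∈ l, s ∈ S) ∧ l.length = n ∧ l.prod = g⁻¹ * h}

/-- Relative Ancona inequality from the ε-avoidance estimate: if the trajectories
avoiding the ball `B_R(p)` contribute at most half of `G(g,h)`, and the Green function
is Harnack-comparable at scale `R` around `p` with constant `C`, then
`G(g,h) ≤ 2 C² |B_R(p)| G(g,p) G(p,h)`. -/
lemma pathWeight_split {G : Type*} [Group G] (μ : G → ℝ≥0∞) (q : G) (b : List G) :
    ∀ a : List G, pathWeight μ (a ++ q :: b) = pathWeight μ (a ++ [q]) * pathWeight μ (q :: b) := by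
  intro a
  induction a with
  | nil => simp [pathWeight]
  | cons x a ih =>
    cases a with
    | nil => cases b <;> simp [pathWeight, mul_assoc]
    | cons y a' =>
      simp only [List.cons_append, pathWeight, List.append_eq] at ih ⊢
      rw [ih, mul_assoc]

lemma green_decomp {G : Type*} [Group G] (μ : G → ℝ≥0∞) (B : Set G) (hfin : B.Finite)
    (g h : G) :
    green μ g h ≤ greenRes μ Bᶜ g h + ∑ q ∈ hfin.toFinset, green μ g q * green μ q h := by
  classical
  set T := {l : List G // IsPathFromTo g h l} with hT
  set s : Set T := {t | ∀ i : ℕ, 0 < i → i + 1 < t.1.length → ∀ x : G, t.1[i]? = some x → x ∈ Bᶜ}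
    with hs
  have hsplit : green μ g h
      = (∑' t : s, pathWeight μ t.1.1) + ∑' t : ↥sᶜ, pathWeight μ t.1.1 :=
    (Summable.tsum_add_tsum_compl (f := fun t : T => pathWeight μ t.1) ENNReal.summable
      ENNReal.summable).symm
  -- first summand equals greenRes
  have h1 : (∑' t : s, pathWeight μ t.1.1) = greenRes μ Bᶜ g h := by
    refine Equiv.tsum_eq (α := ℝ≥0∞)
      (⟨fun t => ⟨t.1.1, t.1.2, t.2⟩, fun l => ⟨⟨l.1, l.2.1⟩, l.2.2⟩,
        fun t => rfl, fun l => rfl⟩ : s ≃ {l : List G // IsPathFromToIn Bᶜ g h l})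
      (fun l => pathWeight μ l.1)
  -- second summand
  set σ := (Σ q : hfin.toFinset,
      ({l : List G // IsPathFromTo g (q : G) l} × {l : List G // IsPathFromTo (q : G) h l}))
    with hσ
  set F : σ → ℝ≥0∞ := fun x => pathWeight μ x.2.1.1 * pathWeight μ x.2.2.1 with hF
  have key : ∀ t : ↥sᶜ, ∃ n : ℕ, 0 < n ∧ n + 1 < t.1.1.length ∧
      ∃ x : G, t.1.1[n]? = some x ∧ x ∈ B := by
    intro t
    have ht := t.2
    simp only [hs, Set.mem_compl_iff, Set.mem_setOf_eq] at ht
    push_neg at ht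
    obtain ⟨n, hn1, hn2, x, hx, hxB⟩ := ht
    exact ⟨n, hn1, hn2, x, hx, hxB⟩
  -- the splitting map
  have main : ∀ t : ↥sᶜ, ∃ y : σ, pathWeight μ t.1.1 = F y ∧ t.1.1 = y.2.1.1 ++ y.2.2.1.tail := by
    intro t
    obtain ⟨n, hn1, hn2, x, hx, hxB⟩ := key t
    set l := t.1.1 with hl
    obtain ⟨hnlen, hget⟩ := List.getElem?_eq_some_iff.mp hx
    have hdrop : l.drop n = x :: l.drop (n + 1) := by
      rw [List.drop_eq_getElem_cons hnlen, hget]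
    have htake : l.take (n + 1) = l.take n ++ [x] := by
      rw [List.take_succ, hx]; rfl
    have hhead : l.head? = some g := t.1.2.1
    have hlast : l.getLast? = some h := t.1.2.2
    obtain ⟨l', hl'⟩ := List.head?_eq_some_iff.mp hhead
    -- head of take n l is g
    have htakehead : (l.take n).head? = some g := by
      obtain ⟨m, rfl⟩ := Nat.exists_eq_add_of_lt hn1
      rw [hl']
      simp [List.take_succ_cons]
    have hp1 : IsPathFromTo g x (l.take (n + 1)) := by
      constructor
      · rw [htake, List.head?_append, htakehead]; rfl
      · rw [htake]; exact List.getLast?_concat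
    have hp2 : IsPathFromTo x h (l.drop n) := by
      constructor
      · rw [hdrop]; rfl
      · have hne : l.drop n ≠ [] := by rw [hdrop]; simp
        obtain ⟨y, hy⟩ := Option.isSome_iff_exists.mp (List.getLast?_isSome.mpr hne)
        have : l.getLast? = (l.drop n).getLast?.or (l.take n).getLast? := by
          conv_lhs => rw [← List.take_append_drop n l]
          rw [List.getLast?_append]
        rw [hlast, hy] at this
        change some h = some y at this
        rw [hy, ← this]
    refine ⟨⟨⟨x, hfin.mem_toFinset.mpr hxB⟩, ⟨l.take (n + 1), hp1⟩, ⟨l.drop n, hp2⟩⟩, ?_, ?_⟩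
    · show pathWeight μ l = pathWeight μ (l.take (n + 1)) * pathWeight μ (l.drop n)
      conv_lhs => rw [← List.take_append_drop n l, hdrop]
      rw [pathWeight_split, ← htake, hdrop]
    · show l = l.take (n + 1) ++ (l.drop n).tail
      rw [List.tail_drop, List.take_append_drop]
  choose i hiw hir using main
  have hinj : Function.Injective i := by
    intro t t' htt
    have : t.1.1 = t'.1.1 := by rw [hir t, hir t', htt]
    exact Subtype.ext (Subtype.ext this)
  have h2 : (∑' t : ↥sᶜ, pathWeight μ t.1.1) ≤ ∑' y : σ, F y := by
    calc (∑' t : ↥sᶜ, pathWeight μ t.1.1) = ∑' t : ↥sᶜ, F (i t) := tsum_congr hiw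
      _ ≤ ∑' y : σ, F y := ENNReal.tsum_comp_le_tsum_of_injective hinj F
  have h3 : (∑' y : σ, F y) = ∑ q ∈ hfin.toFinset, green μ g q * green μ q h := by
    rw [ENNReal.tsum_sigma' F]
    rw [← Finset.tsum_subtype]
    refine tsum_congr fun q => ?_
    show (∑' pr : ({l : List G // IsPathFromTo g (q : G) l} ×
        {l : List G // IsPathFromTo (q : G) h l}), pathWeight μ pr.1.1 * pathWeight μ pr.2.1)
      = green μ g (q : G) * green μ (q : G) h
    rw [ENNReal.tsum_prod' (f := fun pr : ({l : List G // IsPathFromTo g (q : G) l} ×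
        {l : List G // IsPathFromTo (q : G) h l}) => pathWeight μ pr.1.1 * pathWeight μ pr.2.1)]
    simp only [ENNReal.tsum_mul_left, ENNReal.tsum_mul_right]
    rfl
  rw [hsplit, h1]
  exact add_le_add le_rfl (h2.trans h3.le)

theorem green_relative_ancona {G : Type*} [Group G] [Countable G]
    (S : Set G) (μ : G → ℝ≥0∞) (hprob : ∑' g : G, μ g = 1)
    (htrans : ∀ g h : G, green μ g h < ⊤)
    (g h p : G) (R : ℕ)
    (hfin : {q : G | wordDist S p q ≤ R}.Finite)
    (havoid : greenRes μ ({q : G | wordDist S p q ≤ R})ᶜ g h ≤ (1 / 2) * green μ g h)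
    (C : ℝ≥0∞)
    (hharnack : ∀ q : G, wordDist S p q ≤ R →
      green μ g q ≤ C * green μ g p ∧ green μ q h ≤ C * green μ p h) :
    green μ g h ≤ 2 * C ^ 2 * (hfin.toFinset.card : ℝ≥0∞) * (green μ g p * green μ p h) := by
  classical
  have hdec := green_decomp μ {q : G | wordDist S p q ≤ R} hfin g h
  set X : ℝ≥0∞ := C ^ 2 * (hfin.toFinset.card : ℝ≥0∞) * (green μ g p * green μ p h) with hX
  have hsum : ∑ q ∈ hfin.toFinset, green μ g q * green μ q h ≤ X := by
    calc ∑ q ∈ hfin.toFinset, green μ g q * green μ q h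
        ≤ ∑ _q ∈ hfin.toFinset, (C * green μ g p) * (C * green μ p h) := by
          refine Finset.sum_le_sum fun q hq => ?_
          have hq' := hfin.mem_toFinset.mp hq
          exact mul_le_mul' (hharnack q hq').1 (hharnack q hq').2
      _ = X := by rw [Finset.sum_const, nsmul_eq_mul, hX]; ring
  have hle : green μ g h ≤ (1 / 2) * green μ g h + X :=
    hdec.trans (add_le_add havoid hsum)
  have hne : green μ g h ≠ ⊤ := (htrans g h).ne
  have h2 : green μ g h + green μ g h ≤ green μ g h + 2 * X := by
    calc green μ g h + green μ g h = 2 * green μ g h := (two_mul _).symm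
      _ ≤ 2 * ((1 / 2) * green μ g h + X) := mul_le_mul_right hle 2
      _ = (2 * (1 / 2)) * green μ g h + 2 * X := by ring
      _ = green μ g h + 2 * X := by
          rw [show (2 : ℝ≥0∞) * (1 / 2) = 1 by
            rw [one_div]; exact ENNReal.mul_inv_cancel two_ne_zero (by norm_num), one_mul]
  have h3 : green μ g h ≤ 2 * X := by
    exact (WithTop.add_le_add_iff_left hne).mp h2
  calc green μ g h ≤ 2 * X := h3
    _ = 2 * C ^ 2 * (hfin.toFinset.card : ℝ≥0∞) * (green μ g p * green μ p h) := by
        rw [hX]; ring
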